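/- Let X be a real polynomial of degree four with negative leading coefficient such that X(x₀) = X′(x₀) = X″(x₀) = X‴(x₀) = 0 (so x₀ is a root of multiplicity four). Then every differentiable function x : ℝ → ℝ satisfying x′(t)² = X(x(t)) for all t is constant, equal to x₀; in particular the corresponding regular precession is stable. -/

import Mathlib

/-- Degenerate stable case of Demchenko's analysis: if `X` is a real polynomial of
degree four with negative leading coefficient having `x₀` as a root of multiplicity
four (i.e. `X(x₀) = X′(x₀) = X″(x₀) = X‴(x₀) = 0`), then every differentiable
solution of `x′² = X(x)` is constant, equal to `x₀`; in particular the corresponding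
regular precession is stable. -/
theorem regular_precession_degenerate_stable
    (X : Polynomial ℝ) (x₀ : ℝ)
    (hdeg : X.natDegree = 4) (hlead : X.leadingCoeff < 0)
    (h0 : X.eval x₀ = 0)
    (h1 : (Polynomial.derivative X).eval x₀ = 0)
    (h2 : (Polynomial.derivative (Polynomial.derivative X)).eval x₀ = 0)
    (h3 : (Polynomial.derivative (Polynomial.derivative
        (Polynomial.derivative X))).eval x₀ = 0) :
    ∀ x : ℝ → ℝ, Differentiable ℝ x →
      (∀ t, (deriv x t) ^ 2 = X.eval (x t)) → ∀ t, x t = x₀ := by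
  have hX0 : X ≠ 0 := fun h => by simp [h] at hlead
  have hmult : 3 < X.rootMultiplicity x₀ := by
    rw [Polynomial.lt_rootMultiplicity_iff_isRoot_iterate_derivative hX0]
    intro m hm
    interval_cases m <;> simp only [Function.iterate_succ_apply', Function.iterate_zero_apply, Polynomial.IsRoot.def]
    exacts [h0, h1, h2, h3]
  have hdvd : (Polynomial.X - Polynomial.C x₀) ^ 4 ∣ X :=
    dvd_trans (pow_dvd_pow _ hmult) (Polynomial.pow_rootMultiplicity_dvd X x₀)
  have hmonic : ((Polynomial.X - Polynomial.C x₀) ^ 4).Monic :=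
    (Polynomial.monic_X_sub_C x₀).pow 4
  have hdegle : X.natDegree ≤ ((Polynomial.X - Polynomial.C x₀) ^ 4).natDegree := by
    rw [Polynomial.natDegree_pow, Polynomial.natDegree_X_sub_C, hdeg]
  have hform := Polynomial.eq_leadingCoeff_mul_of_monic_of_dvd_of_natDegree_le
    hmonic hdvd hdegle
  have heval : ∀ y, X.eval y = X.leadingCoeff * (y - x₀) ^ 4 := by
    intro y
    conv_lhs => rw [hform]
    simp
  intro x hx hode t
  have h := hode t
  rw [heval] at h
  have hle : X.leadingCoeff * (x t - x₀) ^ 4 ≤ 0 :=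
    mul_nonpos_of_nonpos_of_nonneg hlead.le (by positivity)
  have hge : (0:ℝ) ≤ X.leadingCoeff * (x t - x₀) ^ 4 := h ▸ sq_nonneg _
  have : (x t - x₀) ^ 4 = 0 := by
    rcases mul_eq_zero.1 (le_antisymm hle hge) with h' | h'
    · exact absurd h' hlead.ne
    · exact h'
  have := pow_eq_zero_iff (n := 4) (by norm_num) |>.1 this
  linarith [sub_eq_zero.1 this]
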